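/- If there are k pairwise edge-disjoint T-paths in G and 𝒳 is a T-subpartition, then k ≤ d(𝒳) + Σ_{K∈𝒦} ⌊d(K)/2⌋, where 𝒦 is the collection of vertex sets of connected components of G∖𝒳 and d(𝒳) is the number of edges between distinct members of 𝒳. -/

import Mathlib

open scoped Classical

/-- A finite multigraph without selfloops: edges carry an (arbitrary) orientation
given by `src` and `tgt`, but are regarded as undirected. -/
structure Multigraph where
  V : Type
  E : Type
  [fV : Fintype V]
  [dV : DecidableEq V]
  [fE : Fintype E]
  [dE : DecidableEq E]
  src : E → V
  tgt : E → V
  noLoop : ∀ e, src e ≠ tgt e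

attribute [instance] Multigraph.fV Multigraph.dV Multigraph.fE Multigraph.dE

namespace Multigraph

variable (G : Multigraph)

/-- the edge `e` joins the vertices `u` and `v` (in either orientation). -/
def Joins (e : G.E) (u v : G.V) : Prop :=
  (G.src e = u ∧ G.tgt e = v) ∨ (G.src e = v ∧ G.tgt e = u)

/-- `δ(X)`: the set of edges with exactly one endpoint in `X`. -/
noncomputable def cutE (X : Set G.V) : Finset G.E :=
  Finset.univ.filter fun e =>
    (G.src e ∈ X ∧ G.tgt e ∉ X) ∨ (G.src e ∉ X ∧ G.tgt e ∈ X)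

/-- `d(X) = |δ(X)|`. -/
noncomputable def d (X : Set G.V) : ℕ := (G.cutE X).card

/-- adjacency within the induced subgraph on `W`. -/
def adjOn (W : Set G.V) (u v : G.V) : Prop :=
  u ∈ W ∧ v ∈ W ∧ ∃ e, G.Joins e u v

/-- `K` is the vertex set of a connected component of the subgraph induced on `W`. -/
def IsCompOf (W K : Set G.V) : Prop :=
  ∃ v ∈ W, K = {u | Relation.ReflTransGen (G.adjOn W) v u}

end Multigraph

/-- A `T`-path in `G`: a path whose two (distinct) endpoints are terminals of `T`
and whose internal vertices avoid `T`. -/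
structure TPath (G : Multigraph) (T : Finset G.V) where
  verts : List G.V
  edges : List G.E
  hlen : verts.length = edges.length + 1
  hne : edges ≠ []
  hadj : ∀ i (h : i < edges.length),
    G.Joins (edges.get ⟨i, h⟩) (verts.get ⟨i, by omega⟩) (verts.get ⟨i + 1, by omega⟩)
  nodup : verts.Nodup
  first : G.V
  last : G.V
  hfirst : verts.head? = some first
  hlast : verts.getLast? = some last
  hfirstT : first ∈ T
  hlastT : last ∈ T
  hinternal : ∀ i (h : i < verts.length), 0 < i → i < verts.length - 1 →
    verts.get ⟨i, h⟩ ∉ T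

/-- a family of pairwise edge-disjoint `T`-paths. -/
def PairwiseEdgeDisjoint {G : Multigraph} {T : Finset G.V} {k : ℕ}
    (P : Fin k → TPath G T) : Prop :=
  ∀ i j, i ≠ j → ∀ e, e ∈ (P i).edges → e ∉ (P j).edges

/-- A `T`-subpartition: pairwise disjoint vertex sets `X s` (for `s ∈ T`)
with `X s ∩ T = {s}`. -/
structure TSubpartition (G : Multigraph) (T : Finset G.V) where
  X : G.V → Set G.V
  hmem : ∀ s ∈ T, X s ∩ (T : Set G.V) = {s}
  hdisj : ∀ s ∈ T, ∀ t ∈ T, s ≠ t → Disjoint (X s) (X t)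

namespace TSubpartition

variable {G : Multigraph} {T : Finset G.V} (𝒳 : TSubpartition G T)

/-- the vertex set of `G ∖ 𝒳`. -/
def rest : Set G.V := (⋃ s ∈ T, 𝒳.X s)ᶜ

noncomputable def dSum : ℕ := ∑ s ∈ T, G.d (𝒳.X s)

/-- number of odd components of `G ∖ 𝒳`. -/
noncomputable def oddComps : ℕ :=
  {K : Set G.V | G.IsCompOf 𝒳.rest K ∧ Odd (G.d K)}.ncard

/-- `κ(𝒳) = (Σ_{s∈T} d(X_s) − odd(G∖𝒳)) / 2`. -/
noncomputable def kappa : ℚ := ((𝒳.dSum : ℚ) - (𝒳.oddComps : ℚ)) / 2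

/-- `d(𝒳)`: the number of edges joining two distinct members of `𝒳`. -/
noncomputable def dCross : ℕ :=
  (Finset.univ.filter fun e =>
    ∃ s ∈ T, ∃ t ∈ T, s ≠ t ∧ G.src e ∈ 𝒳.X s ∧ G.tgt e ∈ 𝒳.X t).card

end TSubpartition


section Helpers

variable {G : Multigraph} {T : Finset G.V}

lemma joins_symm {e : G.E} {u v : G.V} (h : G.Joins e u v) : G.Joins e v u :=
  h.elim Or.inr Or.inl

lemma joins_cases {e : G.E} {u v u' v' : G.V} (h : G.Joins e u v) (h' : G.Joins e u' v') :
    (u = u' ∧ v = v') ∨ (u = v' ∧ v = u') := by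
  rcases h with ⟨rfl, rfl⟩ | ⟨rfl, rfl⟩ <;> rcases h' with ⟨rfl, rfl⟩ | ⟨rfl, rfl⟩ <;> tauto

lemma mem_cutE_of_joins {X : Set G.V} {e : G.E} {u v : G.V} (h : G.Joins e u v)
    (hu : u ∈ X) (hv : v ∉ X) : e ∈ G.cutE X := by
  simp only [Multigraph.cutE, Finset.mem_filter, Finset.mem_univ, true_and]
  rcases h with ⟨rfl, rfl⟩ | ⟨rfl, rfl⟩
  · exact Or.inl ⟨hu, hv⟩
  · exact Or.inr ⟨hv, hu⟩

lemma comp_subset {W K : Set G.V} (h : G.IsCompOf W K) : K ⊆ W := by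
  obtain ⟨v, hv, rfl⟩ := h
  intro u hu
  induction hu with
  | refl => exact hv
  | tail _ h ih => exact h.2.1

namespace TPath

variable (p : TPath G T)

/-- the `j`-th vertex of the path, as a total function. -/
noncomputable def v (j : ℕ) : G.V := p.verts.getD j p.first

lemma v_eq (j : ℕ) (h : j < p.verts.length) : p.v j = p.verts.get ⟨j, h⟩ :=
  by simp [TPath.v, List.getD_eq_getElem?_getD, h]

lemma edges_pos : 0 < p.edges.length := List.length_pos_iff.mpr p.hne

lemma v_adj (j : ℕ) (h : j < p.edges.length) :
    G.Joins (p.edges.get ⟨j, h⟩) (p.v j) (p.v (j + 1)) := by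
  have hl := p.hlen
  rw [p.v_eq j (by omega), p.v_eq (j + 1) (by omega)]
  exact p.hadj j h

lemma v_inj {i j : ℕ} (hi : i < p.verts.length) (hj : j < p.verts.length)
    (h : p.v i = p.v j) : i = j := by
  rw [p.v_eq i hi, p.v_eq j hj] at h
  exact Fin.mk.inj_iff.mp (p.nodup.get_inj_iff.mp h)

lemma v_zero : p.v 0 = p.first := by
  rw [p.v_eq 0 (by have := p.hlen; omega)]
  have := p.hfirst
  rw [List.head?_eq_getElem?, List.getElem?_eq_getElem (by have := p.hlen; omega)] at this
  simpa using (Option.some.inj this)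

lemma v_last : p.v p.edges.length = p.last := by
  have hl := p.hlen
  have hne : p.verts ≠ [] := List.length_pos_iff.mp (by omega)
  have h := p.hlast
  rw [List.getLast?_eq_getLast hne, List.getLast_eq_getElem hne] at h
  rw [p.v_eq p.edges.length (by omega)]
  have : p.verts.length - 1 = p.edges.length := by omega
  rw [← Option.some.inj h]
  simp [this]

lemma v_notMem_T {j : ℕ} (h0 : 0 < j) (hj : j < p.edges.length) : p.v j ∉ T := by
  have hl := p.hlen
  rw [p.v_eq j (by omega)]
  exact p.hinternal j (by omega) h0 (by omega)

end TPath

/-- The key dichotomy: every `T`-path contains a cross edge or two distinct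
edges in the cut of some component of `G ∖ 𝒳`. -/
lemma tpath_dichotomy (𝒳 : TSubpartition G T) (p : TPath G T) :
    (∃ e ∈ p.edges, ∃ s ∈ T, ∃ t ∈ T, s ≠ t ∧ G.src e ∈ 𝒳.X s ∧ G.tgt e ∈ 𝒳.X t) ∨
    (∃ K, G.IsCompOf 𝒳.rest K ∧ ∃ e1 ∈ p.edges, ∃ e2 ∈ p.edges,
      e1 ≠ e2 ∧ e1 ∈ G.cutE K ∧ e2 ∈ G.cutE K) := by
  classical
  set n := p.edges.length with hn
  have hn0 : 0 < n := p.edges_pos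
  have hlen := p.hlen
  have hfirst_selfmem : p.first ∈ 𝒳.X p.first := by
    have h := 𝒳.hmem p.first p.hfirstT
    have : p.first ∈ 𝒳.X p.first ∩ (T : Set G.V) := by rw [h]; rfl
    exact this.1
  have hlast_selfmem : p.last ∈ 𝒳.X p.last := by
    have h := 𝒳.hmem p.last p.hlastT
    have : p.last ∈ 𝒳.X p.last ∩ (T : Set G.V) := by rw [h]; rfl
    exact this.1
  have hfl : p.first ≠ p.last := by
    intro h
    have h0 : p.v 0 = p.v n := by rw [p.v_zero, p.v_last, h]
    have := p.v_inj (i := 0) (j := n) (by omega) (by omega) h0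
    omega
  by_cases hrest : ∃ j ≤ n, p.v j ∈ 𝒳.rest
  · -- some vertex in the rest: find a component and two cut edges
    right
    obtain ⟨i0, hi0n, hi0⟩ := hrest
    have hfirstX : p.v 0 ∉ 𝒳.rest := by
      rw [p.v_zero]
      simp only [TSubpartition.rest, Set.mem_compl_iff, not_not, Set.mem_iUnion]
      exact ⟨p.first, p.hfirstT, hfirst_selfmem⟩
    have hlastX : p.v n ∉ 𝒳.rest := by
      rw [p.v_last]
      simp only [TSubpartition.rest, Set.mem_compl_iff, not_not, Set.mem_iUnion]
      exact ⟨p.last, p.hlastT, hlast_selfmem⟩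
    have hi00 : 0 < i0 := by
      rcases Nat.eq_zero_or_pos i0 with rfl | h
      · exact absurd hi0 hfirstX
      · exact h
    have hi0ltn : i0 < n := by
      rcases eq_or_lt_of_le hi0n with rfl | h
      · exact absurd hi0 hlastX
      · exact h
    set Q : ℕ → Prop := fun j => p.v j ∉ 𝒳.rest with hQ
    set a := Nat.findGreatest Q i0 with ha
    have haQ : Q a := Nat.findGreatest_spec (m := 0) (by omega) hfirstX
    have ha_le : a ≤ i0 := Nat.findGreatest_le i0
    have ha_lt : a < i0 := by
      rcases eq_or_lt_of_le ha_le with h | h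
      · exact absurd (h ▸ hi0) haQ
      · exact h
    have hgr : ∀ j, a < j → j ≤ i0 → p.v j ∈ 𝒳.rest := by
      intro j h1 h2
      by_contra hq
      exact Nat.findGreatest_is_greatest h1 h2 hq
    have hex : ∃ m, Q (i0 + m) := by
      refine ⟨n - i0, ?_⟩
      have : i0 + (n - i0) = n := by omega
      rw [hQ, this]
      exact hlastX
    set c := Nat.find hex with hc
    set b := i0 + c with hb
    have hbQ : Q b := Nat.find_spec hex
    have hc0 : 0 < c := by
      rcases Nat.eq_zero_or_pos c with h | h
      · exfalso
        have := hbQ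
        rw [hb, h, Nat.add_zero] at this
        exact this hi0
      · exact h
    have hble : b ≤ n := by
      have : c ≤ n - i0 := Nat.find_min' hex (by
        have : i0 + (n - i0) = n := by omega
        rw [hQ, this]; exact hlastX)
      omega
    have hmin : ∀ j, i0 ≤ j → j < b → p.v j ∈ 𝒳.rest := by
      intro j h1 h2
      have hlt : j - i0 < c := by omega
      have := Nat.find_min hex hlt
      rw [hQ] at this
      simp only [not_not] at this
      have heq : i0 + (j - i0) = j := by omega
      rwa [heq] at this
    set K : Set G.V := {u | Relation.ReflTransGen (G.adjOn 𝒳.rest) (p.v i0) u} with hKdef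
    have hK : G.IsCompOf 𝒳.rest K := ⟨p.v i0, hi0, rfl⟩
    have hKsub : K ⊆ 𝒳.rest := comp_subset hK
    have hback : ∀ m, m ≤ i0 - a - 1 → p.v (i0 - m) ∈ K := by
      intro m
      induction m with
      | zero => intro _; exact Relation.ReflTransGen.refl
      | succ l ih =>
        intro hle
        have h1 : p.v (i0 - l) ∈ K := ih (by omega)
        have step : G.adjOn 𝒳.rest (p.v (i0 - l)) (p.v (i0 - (l + 1))) := by
          refine ⟨hgr _ (by omega) (by omega), hgr _ (by omega) (by omega), ?_⟩
          have hadj := p.v_adj (i0 - (l + 1)) (by omega)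
          have heq : i0 - (l + 1) + 1 = i0 - l := by omega
          rw [heq] at hadj
          exact ⟨_, joins_symm hadj⟩
        exact h1.tail step
    have hforward : ∀ m, m ≤ b - i0 - 1 → p.v (i0 + m) ∈ K := by
      intro m
      induction m with
      | zero => intro _; exact Relation.ReflTransGen.refl
      | succ l ih =>
        intro hle
        have h1 : p.v (i0 + l) ∈ K := ih (by omega)
        have step : G.adjOn 𝒳.rest (p.v (i0 + l)) (p.v (i0 + (l + 1))) := by
          refine ⟨hmin _ (by omega) (by omega), hmin _ (by omega) (by omega), ?_⟩
          have hadj := p.v_adj (i0 + l) (by omega)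
          have heq : i0 + l + 1 = i0 + (l + 1) := by omega
          rw [heq] at hadj
          exact ⟨_, hadj⟩
        exact h1.tail step
    have ha1K : p.v (a + 1) ∈ K := by
      have := hback (i0 - a - 1) le_rfl
      have heq : i0 - (i0 - a - 1) = a + 1 := by omega
      rwa [heq] at this
    have hb1K : p.v (b - 1) ∈ K := by
      have := hforward (b - i0 - 1) le_rfl
      have heq : i0 + (b - i0 - 1) = b - 1 := by omega
      rwa [heq] at this
    have haK : p.v a ∉ K := fun h => haQ (hKsub h)
    have hbK : p.v b ∉ K := fun h => hbQ (hKsub h)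
    have hadj1 := p.v_adj a (by omega)
    have hadj2 := p.v_adj (b - 1) (by omega)
    have hb1 : b - 1 + 1 = b := by omega
    rw [hb1] at hadj2
    refine ⟨K, hK, p.edges.get ⟨a, by omega⟩, List.get_mem _ _,
      p.edges.get ⟨b - 1, by omega⟩, List.get_mem _ _, ?_, ?_, ?_⟩
    · intro heq
      rw [heq] at hadj1
      rcases joins_cases hadj1 hadj2 with ⟨hA, hB⟩ | ⟨hA, hB⟩
      · have := p.v_inj (i := a) (j := b - 1) (by omega) (by omega) hA
        omega
      · have := p.v_inj (i := a) (j := b) (by omega) (by omega) hA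
        omega
    · exact mem_cutE_of_joins (joins_symm hadj1) ha1K haK
    · exact mem_cutE_of_joins hadj2 hb1K hbK
  · -- all vertices lie in members of the subpartition: find a cross edge
    left
    push_neg at hrest
    have hmem : ∀ j, ∃ s, j ≤ n → s ∈ T ∧ p.v j ∈ 𝒳.X s := by
      intro j
      by_cases hj : j ≤ n
      · have := hrest j hj
        simp only [TSubpartition.rest, Set.mem_compl_iff, not_not, Set.mem_iUnion] at this
        obtain ⟨s, hs, hxs⟩ := this
        exact ⟨s, fun _ => ⟨hs, hxs⟩⟩
      · exact ⟨p.first, fun h => absurd h hj⟩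
    choose s hs using hmem
    have h0 : p.first = s 0 := by
      obtain ⟨hT0, hX0⟩ := hs 0 (by omega)
      rw [p.v_zero] at hX0
      have : p.first ∈ 𝒳.X (s 0) ∩ (T : Set G.V) := ⟨hX0, p.hfirstT⟩
      rw [𝒳.hmem (s 0) hT0] at this
      exact this
    have hnlast : p.last = s n := by
      obtain ⟨hTn, hXn⟩ := hs n le_rfl
      rw [p.v_last] at hXn
      have : p.last ∈ 𝒳.X (s n) ∩ (T : Set G.V) := ⟨hXn, p.hlastT⟩
      rw [𝒳.hmem (s n) hTn] at this
      exact this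
    have key : ∃ j < n, s j ≠ s (j + 1) := by
      by_contra hcon
      push_neg at hcon
      have hall : ∀ j, j ≤ n → s j = s 0 := by
        intro j
        induction j with
        | zero => intro _; rfl
        | succ m ih =>
          intro hj
          rw [← hcon m (by omega)]
          exact ih (by omega)
      exact hfl (by rw [h0, hnlast, hall n le_rfl])
    obtain ⟨j, hj, hne⟩ := key
    obtain ⟨hT1, hX1⟩ := hs j (by omega)
    obtain ⟨hT2, hX2⟩ := hs (j + 1) (by omega)
    have hadj := p.v_adj j hj
    rcases hadj with ⟨h1, h2⟩ | ⟨h1, h2⟩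
    · exact ⟨p.edges.get ⟨j, hj⟩, List.get_mem _ _, s j, hT1, s (j + 1), hT2, hne,
        h1 ▸ hX1, h2 ▸ hX2⟩
    · exact ⟨p.edges.get ⟨j, hj⟩, List.get_mem _ _, s (j + 1), hT2, s j, hT1, hne.symm,
        h1 ▸ hX2, h2 ▸ hX1⟩

end Helpers

/-- If there are `k` pairwise edge-disjoint `T`-paths and `𝒳` is a `T`-subpartition,
then `k ≤ d(𝒳) + Σ_{K∈𝒦} ⌊d(K)/2⌋`. -/
theorem edge_disjoint_TPaths_le_dCross_add (G : Multigraph) (T : Finset G.V)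
    (𝒳 : TSubpartition G T) (k : ℕ) (P : Fin k → TPath G T)
    (hP : PairwiseEdgeDisjoint P) :
    k ≤ 𝒳.dCross + ∑ᶠ K ∈ {K : Set G.V | G.IsCompOf 𝒳.rest K}, G.d K / 2 := by
  classical
  rcases Nat.eq_zero_or_pos k with rfl | hk
  · exact Nat.zero_le _
  have hEne : Nonempty G.E := ⟨(P ⟨0, hk⟩).edges.head (P _).hne⟩
  set S : Set (Set G.V) := {K : Set G.V | G.IsCompOf 𝒳.rest K} with hSdef
  have hSfin : S.Finite := Set.toFinite S
  have hsum : ∑ᶠ K ∈ S, G.d K / 2 = ∑ K ∈ hSfin.toFinset, G.d K / 2 :=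
    finsum_mem_eq_finite_toFinset_sum _ hSfin
  set crossSet : Finset G.E := Finset.univ.filter fun e =>
    ∃ s ∈ T, ∃ t ∈ T, s ≠ t ∧ G.src e ∈ 𝒳.X s ∧ G.tgt e ∈ 𝒳.X t with hcrossSet
  have hdC : 𝒳.dCross = crossSet.card := rfl
  set cross : Fin k → Prop := fun i => ∃ e ∈ (P i).edges, e ∈ crossSet with hcross
  set A : Finset (Fin k) := Finset.univ.filter fun i => cross i with hA
  set B : Finset (Fin k) := Finset.univ.filter fun i => ¬ cross i with hB
  have hABcard : A.card + B.card = k := by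
    rw [hA, hB, Finset.card_filter_add_card_filter_not, Finset.card_univ,
      Fintype.card_fin]
  -- bound A by the number of cross edges
  have hchoose : ∀ i : Fin k, ∃ e, cross i → e ∈ (P i).edges ∧ e ∈ crossSet := by
    intro i
    by_cases h : cross i
    · obtain ⟨e, he1, he2⟩ := h
      exact ⟨e, fun _ => ⟨he1, he2⟩⟩
    · exact ⟨Classical.arbitrary G.E, fun hc => absurd hc h⟩
  choose g hg using hchoose
  have hAcard : A.card ≤ crossSet.card := by
    apply Finset.card_le_card_of_injOn g
    · intro i hi
      exact (hg i (Finset.mem_filter.mp hi).2).2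
    · intro i hi j hj hij
      by_contra hne
      exact hP i j hne (g j) (hij ▸ (hg i (Finset.mem_filter.mp hi).2).1)
        ((hg j (Finset.mem_filter.mp hj).2).1)
  -- bound B by the component sums
  have hchoose2 : ∀ i : Fin k, ∃ (K : Set G.V) (e1 e2 : G.E), ¬ cross i →
      G.IsCompOf 𝒳.rest K ∧ e1 ∈ (P i).edges ∧ e2 ∈ (P i).edges ∧ e1 ≠ e2 ∧
      e1 ∈ G.cutE K ∧ e2 ∈ G.cutE K := by
    intro i
    by_cases h : cross i
    · exact ⟨∅, Classical.arbitrary G.E, Classical.arbitrary G.E, fun hc => absurd h hc⟩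
    · rcases tpath_dichotomy 𝒳 (P i) with hleft | ⟨K, hK, e1, he1, e2, he2, hne, hc1, hc2⟩
      · exfalso
        obtain ⟨e, he, hprop⟩ := hleft
        have hecs : e ∈ crossSet := by
          simp only [hcrossSet, Finset.mem_filter, Finset.mem_univ, true_and]
          exact hprop
        exact h ⟨e, he, hecs⟩
      · exact ⟨K, e1, e2, fun _ => ⟨hK, he1, he2, hne, hc1, hc2⟩⟩
  choose comp f1 f2 hprop using hchoose2
  have hfiber : B.card = ∑ K ∈ hSfin.toFinset, (B.filter fun i => comp i = K).card := by
    apply Finset.card_eq_sum_card_fiberwise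
    intro i hi
    rw [Finset.mem_coe, Set.Finite.mem_toFinset]
    exact (hprop i (Finset.mem_filter.mp hi).2).1
  have hperK : ∀ K ∈ hSfin.toFinset, (B.filter fun i => comp i = K).card ≤ G.d K / 2 := by
    intro K hK
    set BK : Finset (Fin k) := B.filter fun i => comp i = K with hBK
    have hmemBK : ∀ i ∈ BK, ¬ cross i ∧ comp i = K := by
      intro i hi
      rw [hBK, Finset.mem_filter] at hi
      exact ⟨(Finset.mem_filter.mp hi.1).2, hi.2⟩
    have hsub : BK.biUnion (fun i => {f1 i, f2 i}) ⊆ G.cutE K := by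
      intro e he
      simp only [Finset.mem_biUnion, Finset.mem_insert, Finset.mem_singleton] at he
      obtain ⟨i, hi, he⟩ := he
      obtain ⟨hnc, hci⟩ := hmemBK i hi
      obtain ⟨_, _, _, _, hc1, hc2⟩ := hprop i hnc
      rcases he with rfl | rfl
      · exact hci ▸ hc1
      · exact hci ▸ hc2
    have hdisj : ∀ i ∈ BK, ∀ j ∈ BK, i ≠ j →
        Disjoint ({f1 i, f2 i} : Finset G.E) {f1 j, f2 j} := by
      intro i hi j hj hij
      obtain ⟨hnci, _⟩ := hmemBK i hi
      obtain ⟨hncj, _⟩ := hmemBK j hj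
      obtain ⟨_, he1i, he2i, _, _, _⟩ := hprop i hnci
      obtain ⟨_, he1j, he2j, _, _, _⟩ := hprop j hncj
      rw [Finset.disjoint_left]
      intro e he hee
      simp only [Finset.mem_insert, Finset.mem_singleton] at he hee
      have hei : e ∈ (P i).edges := by rcases he with rfl | rfl <;> assumption
      have hej : e ∈ (P j).edges := by rcases hee with rfl | rfl <;> assumption
      exact hP i j hij e hei hej
    have hcard2 : ∀ i ∈ BK, ({f1 i, f2 i} : Finset G.E).card = 2 := by
      intro i hi
      obtain ⟨hnc, _⟩ := hmemBK i hi
      obtain ⟨_, _, _, hne, _, _⟩ := hprop i hnc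
      rw [Finset.card_insert_of_notMem (by simpa using hne), Finset.card_singleton]
    have hcount : 2 * BK.card ≤ G.d K := by
      calc 2 * BK.card = ∑ i ∈ BK, ({f1 i, f2 i} : Finset G.E).card := by
            rw [Finset.sum_congr rfl hcard2, Finset.sum_const, smul_eq_mul, mul_comm]
        _ = (BK.biUnion fun i => {f1 i, f2 i}).card := (Finset.card_biUnion hdisj).symm
        _ ≤ (G.cutE K).card := Finset.card_le_card hsub
        _ = G.d K := rfl
    rw [Nat.le_div_iff_mul_le (by norm_num)]
    omega
  have hBcard : B.card ≤ ∑ K ∈ hSfin.toFinset, G.d K / 2 := by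
    rw [hfiber]
    exact Finset.sum_le_sum hperK
  rw [hsum, hdC]
  omega
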